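/- For all real numbers x with 0 ≤ x ≤ 1 and integers n ≥ 2, k with 1 ≤ k ≤ n and k/n ≤ x ≤ k/(n-1), we have k ≤ (4k/(4k-1)) · ((n-1+k)x - (n-1)x²). -/

import Mathlib

theorem stmt_14 (n k : ℕ) (x : ℝ) (hx0 : 0 ≤ x) (hx1 : x ≤ 1)
    (hn : 2 ≤ n) (hk1 : 1 ≤ k) (hkn : k ≤ n)
    (hlo : (k : ℝ) / n ≤ x) (hhi : x ≤ (k : ℝ) / ((n : ℝ) - 1)) :
    (k : ℝ) ≤ (4 * k / (4 * k - 1)) * (((n : ℝ) - 1 + k) * x - ((n : ℝ) - 1) * x ^ 2) := by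
  have hnR : (2 : ℝ) ≤ (n : ℝ) := by exact_mod_cast hn
  have hkR : (1 : ℝ) ≤ (k : ℝ) := by exact_mod_cast hk1
  have hknR : (k : ℝ) ≤ (n : ℝ) := by exact_mod_cast hkn
  have hn1 : (0 : ℝ) < (n : ℝ) - 1 := by linarith
  have hnpos : (0 : ℝ) < (n : ℝ) := by linarith
  have hc : (0 : ℝ) < 4 * (k : ℝ) - 1 := by linarith
  have h1 : (n : ℝ) * x - k ≥ 0 := by
    have := (div_le_iff₀ hnpos).mp hlo; linarith
  have h2 : (k : ℝ) - ((n : ℝ) - 1) * x ≥ 0 := by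
    have := (le_div_iff₀ hn1).mp hhi; linarith
  have hprod : ((n : ℝ) * x - k) * ((k : ℝ) - ((n : ℝ) - 1) * x) ≥ 0 :=
    mul_nonneg h1 h2
  have hamgm : 4 * (k : ℝ) * ((n : ℝ) - k) ≤ (n : ℝ) ^ 2 := by nlinarith [sq_nonneg ((n : ℝ) - 2 * k)]
  rw [div_mul_eq_mul_div, le_div_iff₀ hc]
  have h3 : 0 ≤ ((n : ℝ) * x - k) * (((n : ℝ) - 1) * ((n : ℝ) - k)) :=
    mul_nonneg h1 (mul_nonneg (le_of_lt hn1) (by linarith))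
  have h4 : 0 ≤ 4 * (k : ℝ) * (n : ℝ) * (((n : ℝ) * x - k) * ((k : ℝ) - ((n : ℝ) - 1) * x)) := by
    positivity
  have h5 : 0 ≤ (k : ℝ) * ((n : ℝ) ^ 2 - 4 * (k : ℝ) * ((n : ℝ) - k)) := by nlinarith
  have hn2 : (0:ℝ) < (n:ℝ) ^ 2 := by positivity
  have key2 : (k:ℝ) * (4 * k - 1) * (n:ℝ) ^ 2 ≤
      4 * k * (((n : ℝ) - 1 + k) * x - ((n : ℝ) - 1) * x ^ 2) * (n:ℝ) ^ 2 := by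
    nlinarith [mul_nonneg (by positivity : (0:ℝ) ≤ 4 * (k:ℝ)) h3, h4, h5]
  exact (mul_le_mul_iff_of_pos_right hn2).mp key2
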